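/- Let L be a decidable set of propositional formulas closed under substitution (a decidable propositional logic). Then there exists a sequence (Mᵢ)_{i∈ℕ} of finite-valued matrices such that L ⊆ Taut(Mᵢ) for every i, Taut(Mᵢ₊₁) ⊆ Taut(Mᵢ) for every i, and ⋂ᵢ Taut(Mᵢ) = L. -/

import Mathlib

/-- Formulas of a propositional language with connectives `C` of arities `ar`. -/
inductive Fml (C : Type) (ar : C → ℕ) : Type
  | var : ℕ → Fml C ar
  | app : (c : C) → (Fin (ar c) → Fml C ar) → Fml C ar

/-- A (matrix) for the language: truth values, designated values, truth functions. -/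
structure Mat (C : Type) (ar : C → ℕ) where
  V : Type
  desig : Set V
  interp : (c : C) → (Fin (ar c) → V) → V

variable {C : Type} {ar : C → ℕ}

/-- Extension of a valuation to all formulas. -/
def Mat.eval (M : Mat C ar) (I : ℕ → M.V) : Fml C ar → M.V
  | .var n => I n
  | .app c f => M.interp c fun i => M.eval I (f i)

/-- The set of tautologies of a matrix. -/
def Mat.Taut (M : Mat C ar) : Set (Fml C ar) :=
  {A | ∀ I : ℕ → M.V, M.eval I A ∈ M.desig}

/-- Substitution of formulas for variables. -/
def subst (σ : ℕ → Fml C ar) : Fml C ar → Fml C ar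
  | .var n => σ n
  | .app c f => .app c fun i => subst σ (f i)

/-- A Hilbert calculus: finitely many axioms and rules (premises, conclusion). -/
structure Calc (C : Type) (ar : C → ℕ) where
  axioms : List (Fml C ar)
  rules : List (List (Fml C ar) × Fml C ar)

/-- Theorems of a Hilbert calculus. -/
inductive Thm (K : Calc C ar) : Fml C ar → Prop
  | ax {A : Fml C ar} (σ : ℕ → Fml C ar) : A ∈ K.axioms → Thm K (subst σ A)
  | rule {r : List (Fml C ar) × Fml C ar} (σ : ℕ → Fml C ar) :
      r ∈ K.rules → (∀ B ∈ r.1, Thm K (subst σ B)) → Thm K (subst σ r.2)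

/-- `M` is normal for `K` (`K` is strongly sound for `M`; `M` is a cover of `K`). -/
def NormalFor (M : Mat C ar) (K : Calc C ar) : Prop :=
  (∀ A ∈ K.axioms, A ∈ M.Taut) ∧
  ∀ r ∈ K.rules, ∀ I : ℕ → M.V,
    (∀ B ∈ r.1, M.eval I B ∈ M.desig) → M.eval I r.2 ∈ M.desig

/-- A concrete numerical encoding of formulas. -/
def encF [Encodable C] : Fml C ar → ℕ
  | .var n => Nat.pair 0 n
  | .app c f =>
      Nat.pair 1 (Nat.pair (Encodable.encode c)
        (Encodable.encode (List.ofFn fun i => encF (f i))))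


section AuxDefs
variable {C : Type} {ar : C → ℕ}

/-- Depth of a formula. -/
def depth : Fml C ar → ℕ
  | .var _ => 0
  | .app _ f => (Finset.univ.sup fun i => depth (f i)) + 1

/-- Largest variable index occurring in a formula (0 if none). -/
def maxvar : Fml C ar → ℕ
  | .var n => n
  | .app _ f => Finset.univ.sup fun i => maxvar (f i)

lemma depth_child_le {c : C} {f : Fin (ar c) → Fml C ar} (i : Fin (ar c)) :
    depth (f i) + 1 ≤ depth (Fml.app c f) := by
  simp only [depth]
  exact Nat.add_le_add_right (Finset.le_sup (f := fun j => depth (f j)) (Finset.mem_univ i)) 1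

lemma maxvar_child_le {c : C} {f : Fin (ar c) → Fml C ar} (i : Fin (ar c)) :
    maxvar (f i) ≤ maxvar (Fml.app c f) :=
  Finset.le_sup (f := fun j => maxvar (f j)) (Finset.mem_univ i)

lemma subst_eq_self (A : Fml C ar) (σ : ℕ → Fml C ar)
    (h : ∀ n ≤ maxvar A, σ n = .var n) : subst σ A = A := by
  induction A with
  | var n => exact h n le_rfl
  | app c f ih =>
    simp only [subst]
    congr 1
    funext i
    exact ih i fun n hn => h n (hn.trans (maxvar_child_le i))

lemma finite_bounded [Fintype C] (d k : ℕ) :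
    {B : Fml C ar | depth B ≤ d ∧ maxvar B ≤ k}.Finite := by
  induction d with
  | zero =>
    apply (Set.finite_range fun n : Fin (k + 1) => (Fml.var n.1 : Fml C ar)).subset
    rintro B ⟨hd, hv⟩
    cases B with
    | var n => exact ⟨⟨n, Nat.lt_succ_of_le hv⟩, rfl⟩
    | app c f => simp [depth] at hd
  | succ d ih =>
    have h2 : ∀ c : C, ((fun f => Fml.app c f) ''
        (Set.univ.pi fun _ : Fin (ar c) =>
          {B : Fml C ar | depth B ≤ d ∧ maxvar B ≤ k})).Finite :=
      fun c => (Set.Finite.pi fun _ => ih).image _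
    apply (((Set.finite_range fun n : Fin (k + 1) => (Fml.var n.1 : Fml C ar)).union
      (Set.finite_iUnion h2)).subset)
    rintro B ⟨hd, hv⟩
    cases B with
    | var n => exact Or.inl ⟨⟨n, Nat.lt_succ_of_le hv⟩, rfl⟩
    | app c f =>
      refine Or.inr (Set.mem_iUnion.2 ⟨c, ⟨f, ?_, rfl⟩⟩)
      intro i _
      refine ⟨?_, (maxvar_child_le (f := f) i).trans hv⟩
      have h1 := depth_child_le (f := f) i
      omega

/-- The bounded carrier type. -/
abbrev BV (C : Type) (ar : C → ℕ) (d k : ℕ) : Type :=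
  Option {B : Fml C ar // depth B ≤ d ∧ maxvar B ≤ k}

/-- Pack a formula into the bounded carrier. -/
def mkv (d k : ℕ) (A : Fml C ar) : BV C ar d k :=
  if h : depth A ≤ d ∧ maxvar A ≤ k then some ⟨A, h⟩ else none

/-- Unpack, mapping overflow to a variable outside the bound. -/
def unv (d k : ℕ) (v : BV C ar d k) : Fml C ar :=
  v.elim (Fml.var (k + 1)) Subtype.val

lemma mkv_pos {d k : ℕ} {A : Fml C ar} (h : depth A ≤ d ∧ maxvar A ≤ k) :
    mkv d k A = some ⟨A, h⟩ := dif_pos h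

lemma mkv_neg {d k : ℕ} {A : Fml C ar} (h : ¬(depth A ≤ d ∧ maxvar A ≤ k)) :
    mkv d k A = none := dif_neg h

/-- The characteristic matrix of a logic for given bounds. -/
def charMat (L : Set (Fml C ar)) (d k : ℕ) : Mat C ar where
  V := BV C ar d k
  desig := {v | ∀ B : {B : Fml C ar // depth B ≤ d ∧ maxvar B ≤ k}, v = some B → B.1 ∈ L}
  interp c g := mkv d k (.app c fun i => unv d k (g i))

lemma charMat_eval (L : Set (Fml C ar)) (d k : ℕ) (I : ℕ → (charMat L d k).V)
    (A : Fml C ar) :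
    (charMat L d k).eval I A = mkv d k (subst (fun n => unv d k (I n)) A) := by
  induction A with
  | var n =>
    show I n = mkv d k (unv d k (I n))
    cases hI : I n with
    | none =>
      have : ¬(depth (Fml.var (k + 1) : Fml C ar) ≤ d ∧
          maxvar (Fml.var (k + 1) : Fml C ar) ≤ k) := by
        simp [maxvar]
      simp [unv, mkv_neg this]
      rfl
    | some B =>
      simp only [unv, Option.elim]
      rw [mkv_pos B.2]
  | app c f ih =>
    have hstep : (charMat L d k).eval I (.app c f) =
        mkv d k (.app c fun i => unv d k ((charMat L d k).eval I (f i))) := rfl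
    rw [hstep]
    simp only [subst]
    by_cases hall : ∀ i, depth (subst (fun n => unv d k (I n)) (f i)) ≤ d ∧
        maxvar (subst (fun n => unv d k (I n)) (f i)) ≤ k
    · congr 1
      congr 1
      funext i
      rw [ih i, mkv_pos (hall i)]
      rfl
    · obtain ⟨i0, hi0⟩ := not_forall.1 hall
      rw [mkv_neg, mkv_neg]
      · intro hgood
        apply hi0
        constructor
        · have h1 := depth_child_le (f := fun i => subst (fun n => unv d k (I n)) (f i)) i0
          have h2 := hgood.1
          omega
        · exact (maxvar_child_le (f := fun i => subst (fun n => unv d k (I n)) (f i)) i0).trans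
            hgood.2
      · intro hgood
        have heq : unv d k ((charMat L d k).eval I (f i0)) = Fml.var (k + 1) := by
          rw [ih i0, mkv_neg hi0]; rfl
        have h1 := maxvar_child_le
          (f := fun i => unv d k ((charMat L d k).eval I (f i))) i0
        rw [heq] at h1
        have : (k + 1 : ℕ) ≤ k := le_trans (by simpa [maxvar] using h1) hgood.2
        omega

lemma charMat_none_desig (L : Set (Fml C ar)) (d k : ℕ) :
    (none : BV C ar d k) ∈ (charMat L d k).desig := by
  intro B hB; cases hB

lemma charMat_taut (L : Set (Fml C ar))
    (hsub : ∀ A ∈ L, ∀ σ : ℕ → Fml C ar, subst σ A ∈ L) (d k : ℕ) :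
    L ⊆ (charMat L d k).Taut := by
  intro A hA I
  rw [charMat_eval]
  by_cases h : depth (subst (fun n => unv d k (I n)) A) ≤ d ∧
      maxvar (subst (fun n => unv d k (I n)) A) ≤ k
  · rw [mkv_pos h]
    rintro B hB
    cases hB
    exact hsub A hA _
  · rw [mkv_neg h]
    exact charMat_none_desig L d k

lemma charMat_not_taut (L : Set (Fml C ar)) (A : Fml C ar) (hA : A ∉ L) :
    A ∉ (charMat L (depth A) (maxvar A)).Taut := by
  intro hT
  set d := depth A
  set k := maxvar A
  set I : ℕ → (charMat L d k).V := fun n =>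
    if h : n ≤ k then some ⟨Fml.var n, ⟨Nat.zero_le _, h⟩⟩ else none with hIdef
  have hJ : ∀ n ≤ maxvar A, unv d k (I n) = Fml.var n := by
    intro n hn
    simp only [hIdef, dif_pos (show n ≤ k from hn), unv, Option.elim]
    exact congrArg (unv d k) (show I n = some ⟨Fml.var n, ⟨Nat.zero_le _, hn⟩⟩ from dif_pos hn)
  have := hT I
  rw [charMat_eval, subst_eq_self A _ hJ, mkv_pos ⟨le_rfl, le_rfl⟩] at this
  exact hA (this _ rfl)

instance charMat_finite [Fintype C] (L : Set (Fml C ar)) (d k : ℕ) :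
    Finite (charMat L d k).V := by
  haveI : Finite {B : Fml C ar // depth B ≤ d ∧ maxvar B ≤ k} :=
    (finite_bounded d k).to_subtype
  show Finite (BV C ar d k)
  exact Finite.of_equiv _ (Equiv.optionEquivSumPUnit.{0,0} _).symm

instance charMat_nonempty (L : Set (Fml C ar)) (d k : ℕ) :
    Nonempty (charMat L d k).V := ⟨none⟩

/-- Product of two matrices. -/
def prodMat (M N : Mat C ar) : Mat C ar where
  V := M.V × N.V
  desig := {p | p.1 ∈ M.desig ∧ p.2 ∈ N.desig}
  interp c g := (M.interp c fun i => (g i).1, N.interp c fun i => (g i).2)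

lemma prodMat_eval (M N : Mat C ar) (I : ℕ → (prodMat M N).V) (A : Fml C ar) :
    (prodMat M N).eval I A =
      (M.eval (fun n => (I n).1) A, N.eval (fun n => (I n).2) A) := by
  induction A with
  | var n => rfl
  | app c f ih =>
    have hstep : (prodMat M N).eval I (.app c f) =
        ((M.interp c fun i => ((prodMat M N).eval I (f i)).1),
         (N.interp c fun i => ((prodMat M N).eval I (f i)).2)) := rfl
    rw [hstep]
    have h1 : (fun i => ((prodMat M N).eval I (f i)).1) =
        fun i => M.eval (fun n => (I n).1) (f i) := by
      funext i; rw [ih i]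
    have h2 : (fun i => ((prodMat M N).eval I (f i)).2) =
        fun i => N.eval (fun n => (I n).2) (f i) := by
      funext i; rw [ih i]
    rw [h1, h2]
    rfl

lemma prodMat_taut_left (M N : Mat C ar) [Nonempty N.V] :
    (prodMat M N).Taut ⊆ M.Taut := by
  intro A hA I
  have := hA fun n => (I n, Classical.arbitrary N.V)
  erw [prodMat_eval] at this
  exact this.1

lemma prodMat_taut_right (M N : Mat C ar) [Nonempty M.V] :
    (prodMat M N).Taut ⊆ N.Taut := by
  intro A hA I
  have := hA fun n => (Classical.arbitrary M.V, I n)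
  erw [prodMat_eval] at this
  exact this.2

lemma prodMat_taut_mem {M N : Mat C ar} {A : Fml C ar}
    (hM : A ∈ M.Taut) (hN : A ∈ N.Taut) : A ∈ (prodMat M N).Taut := by
  intro I
  rw [prodMat_eval]
  exact ⟨hM _, hN _⟩

/-- The decreasing sequence of matrices. -/
def matSeq (L : Set (Fml C ar)) (e : ℕ → Fml C ar) : ℕ → Mat C ar
  | 0 => charMat L (depth (e 0)) (maxvar (e 0))
  | i + 1 => prodMat (matSeq L e i) (charMat L (depth (e (i + 1))) (maxvar (e (i + 1))))

instance matSeq_nonempty (L : Set (Fml C ar)) (e : ℕ → Fml C ar) (i : ℕ) :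
    Nonempty (matSeq L e i).V := by
  induction i with
  | zero => exact charMat_nonempty L _ _
  | succ i ih =>
    exact ⟨(Classical.choice ih, none)⟩

instance matSeq_finite [Fintype C] (L : Set (Fml C ar)) (e : ℕ → Fml C ar) (i : ℕ) :
    Finite (matSeq L e i).V := by
  induction i with
  | zero => exact charMat_finite L _ _
  | succ i ih =>
    haveI := ih
    show Finite ((matSeq L e i).V ×
      (charMat L (depth (e (i + 1))) (maxvar (e (i + 1)))).V)
    infer_instance

lemma encF_inj [Encodable C] : Function.Injective (encF : Fml C ar → ℕ) := by
  intro A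
  induction A with
  | var n =>
    intro B h
    cases B with
    | var m =>
      simp only [encF, Nat.pair_eq_pair] at h
      rw [h.2]
    | app c f => simp [encF, Nat.pair_eq_pair] at h
  | app c f ih =>
    intro B h
    cases B with
    | var m => simp [encF, Nat.pair_eq_pair] at h
    | app c' f' =>
      simp only [encF, Nat.pair_eq_pair, true_and] at h
      obtain ⟨hc, hl⟩ := h
      have hc' : c = c' := Encodable.encode_injective hc
      subst hc'
      have hfn := List.ofFn_injective (Encodable.encode_injective hl)
      congr 1
      funext i
      exact ih i (congrFun hfn i)

end AuxDefs

/-- Proposition 6.1: every decidable propositional logic `L` (a decidable set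
of formulas closed under substitution) is the intersection of a decreasing
sequence of tautology sets of finite-valued matrices, each containing `L`. -/
theorem sequential_approximation_of_decidable_logic
    [Fintype C] [DecidableEq C] [Encodable C] (L : Set (Fml C ar))
    (hsub : ∀ A ∈ L, ∀ σ : ℕ → Fml C ar, subst σ A ∈ L)
    (hdec : ∃ f : ℕ → Bool, Computable f ∧
      ∀ A : Fml C ar, (f (encF A) = true ↔ A ∈ L)) :
    ∃ M : ℕ → Mat C ar, (∀ i, Finite (M i).V) ∧
      (∀ i, L ⊆ (M i).Taut) ∧
      (∀ i, (M (i + 1)).Taut ⊆ (M i).Taut) ∧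
      (⋂ i, (M i).Taut) = L := by
  classical
  haveI : Countable (Fml C ar) := ⟨⟨encF, encF_inj⟩⟩
  haveI : Nonempty (Fml C ar) := ⟨.var 0⟩
  obtain ⟨e, he⟩ := exists_surjective_nat (Fml C ar)
  refine ⟨matSeq L e, fun i => matSeq_finite L e i, ?_, ?_, ?_⟩
  · intro i
    induction i with
    | zero => exact charMat_taut L hsub _ _
    | succ i ih =>
      intro A hA
      exact prodMat_taut_mem (ih hA) (charMat_taut L hsub _ _ hA)
  · intro i
    exact prodMat_taut_left _ _
  · have hsub' : ∀ i, (matSeq L e i).Taut ⊆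
        (charMat L (depth (e i)) (maxvar (e i))).Taut := by
      intro i
      cases i with
      | zero => exact subset_rfl
      | succ i => exact prodMat_taut_right _ _
    apply Set.Subset.antisymm
    · intro A hA
      by_contra hAL
      obtain ⟨i, hi⟩ := he A
      subst hi
      exact charMat_not_taut L (e i) hAL (hsub' i (Set.mem_iInter.1 hA i))
    · intro A hA
      refine Set.mem_iInter.2 fun i => ?_
      induction i with
      | zero => exact charMat_taut L hsub _ _ hA
      | succ i ih => exact prodMat_taut_mem ih (charMat_taut L hsub _ _ hA)
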